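/- arXiv:0912.5169 — 3 statements merged into one kernel-verified Lean document; each statement's English description precedes it below -/
import Mathlib

section
/- Let f(u,v) = 2 - u² + v - uv. If z, w ∈ S^1 satisfy f(z,w) = 0, then Re(z) = (1 - √57)/8. -/
theorem unitary_zero_re_of_two_sub_usq_add_v_sub_uv
    (z w : ℂ) (hz : ‖z‖ = 1) (hw : ‖w‖ = 1)
    (hf : 2 - z ^ 2 + w - z * w = 0) :
    z.re = (1 - Real.sqrt 57) / 8 := by
  have hz2 : Complex.normSq z = 1 := by
    have := congrArg (· ^ 2) hz
    simpa [Complex.sq_norm] using this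
  have hw2 : Complex.normSq w = 1 := by
    have := congrArg (· ^ 2) hw
    simpa [Complex.sq_norm] using this
  have key : w * (1 - z) = z ^ 2 - 2 := by linear_combination hf
  have hnorm : Complex.normSq (w * (1 - z)) = Complex.normSq (z ^ 2 - 2) := by
    rw [key]
  rw [Complex.normSq_mul, hw2, one_mul] at hnorm
  set x := z.re with hx
  set y := z.im with hy
  have hzxy : x ^ 2 + y ^ 2 = 1 := by
    simpa [Complex.normSq_apply, sq] using hz2
  have hquad : 8 * x ^ 2 - 2 * x - 7 = 0 := by
    simp only [Complex.normSq_apply, pow_two, Complex.sub_re, Complex.sub_im, Complex.one_re,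
      Complex.one_im, Complex.mul_re, Complex.mul_im, Complex.re_ofNat, Complex.im_ofNat] at hnorm
    nlinarith [hnorm, hzxy]
  have h57 : Real.sqrt 57 ^ 2 = 57 := Real.sq_sqrt (by norm_num)
  have h7 : (7:ℝ) ≤ Real.sqrt 57 := by
    nlinarith [Real.sqrt_nonneg 57]
  have hx1 : x ≤ 1 := by nlinarith [sq_nonneg y]
  have hfac : (x - (1 - Real.sqrt 57) / 8) * (x - (1 + Real.sqrt 57) / 8) = 0 := by
    nlinarith [hquad, h57]
  rcases mul_eq_zero.mp hfac with h | h
  · linarith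
  · exfalso; nlinarith
end

section
/- Let g(u) = u⁴ - 3u³ + 3u + 3. Then |g(z)| ≥ 2 for every z ∈ S^1. -/
theorem abs_g_ge_two_on_circle (z : ℂ) (hz : ‖z‖ = 1) :
    2 ≤ ‖z ^ 4 - 3 * z ^ 3 + 3 * z + 3‖ := by
  set w := z ^ 4 - 3 * z ^ 3 + 3 * z + 3 with hw
  have h : z.re ^ 2 + z.im ^ 2 = 1 := by
    have h2 : ‖z‖ = 1 := hz
    have h3 := Complex.sq_norm z
    rw [h2, Complex.normSq_apply] at h3
    nlinarith [h3]
  have hsq : ‖w‖ ^ 2 = Complex.normSq w := by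
    rw [← Complex.sq_norm]
  have expand : Complex.normSq w =
      4 + 12 * (2 * z.re ^ 2 - z.re - 2) ^ 2 + (z.re ^ 2 + z.im ^ 2 - 1) *
        (43 + 34 * z.im ^ 2 + 10 * z.im ^ 4 + z.im ^ 6 + 30 * z.re
          - 24 * z.re * z.im ^ 2 - 6 * z.re * z.im ^ 4 - 50 * z.re ^ 2
          + 20 * z.re ^ 2 * z.im ^ 2 + 3 * z.re ^ 2 * z.im ^ 4
          - 12 * z.re ^ 3 * z.im ^ 2 + 10 * z.re ^ 4 + 3 * z.re ^ 4 * z.im ^ 2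
          - 6 * z.re ^ 5 + z.re ^ 6) := by
    rw [hw]
    simp only [Complex.normSq_apply, Complex.sub_re, Complex.sub_im, Complex.add_re,
      Complex.add_im, Complex.mul_re, Complex.mul_im, Complex.re_ofNat, Complex.im_ofNat,
      pow_succ, pow_zero, one_mul]
    ring
  have key : 4 ≤ ‖w‖ ^ 2 := by
    rw [hsq, expand, show z.re ^ 2 + z.im ^ 2 - 1 = 0 by linarith, zero_mul, add_zero]
    nlinarith [sq_nonneg (2 * z.re ^ 2 - z.re - 2)]
  nlinarith [norm_nonneg w, key]
end

section
/- Let ξ be a real root of t⁴ + t³ - 2t² + t + 1 and let η = s(ξ) where s(t) = 2t/(1+t²) + i(1-t²)/(1+t²). Then η ∈ S^1 and g(η) = 2·conj(η), where g(u) = u⁴ - 3u³ + 3u + 3; in particular |g(η)| = 2. -/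
open Complex in
theorem g_eta_eq_two_conj_eta
    (ξ : ℝ) (hξ : ξ ^ 4 + ξ ^ 3 - 2 * ξ ^ 2 + ξ + 1 = 0)
    (η : ℂ)
    (hη : η = (2 * ξ / (1 + ξ ^ 2) : ℝ) + I * ((1 - ξ ^ 2) / (1 + ξ ^ 2) : ℝ)) :
    ‖η‖ = 1 ∧ η ^ 4 - 3 * η ^ 3 + 3 * η + 3 = 2 * (starRingEnd ℂ) η ∧
      ‖η ^ 4 - 3 * η ^ 3 + 3 * η + 3‖ = 2 := by
  have hd : (1 : ℝ) + ξ ^ 2 ≠ 0 := by positivity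
  have hdC : (1 : ℂ) + (ξ : ℂ) ^ 2 ≠ 0 := by
    intro h
    exact hd (by exact_mod_cast congrArg Complex.re h)
  have hC : (ξ : ℂ) ^ 4 + (ξ : ℂ) ^ 3 - 2 * (ξ : ℂ) ^ 2 + (ξ : ℂ) + 1 = 0 := by
    exact_mod_cast congrArg (Complex.ofReal) hξ
  have hη' : η = (2 * (ξ : ℂ) + I * (1 - (ξ : ℂ) ^ 2)) / (1 + (ξ : ℂ) ^ 2) := by
    rw [hη]; push_cast; field_simp
  have hnorm : ‖η‖ = 1 := by
    have h1 : η * (starRingEnd ℂ) η = 1 := by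
      rw [hη']
      simp only [map_div₀, map_add, map_mul, map_sub, map_one, map_pow, map_ofNat,
        Complex.conj_I, Complex.conj_ofReal]
      field_simp
      linear_combination (2*(ξ:ℂ)^2 - (ξ:ℂ)^4 - 1) * Complex.I_sq
    have := congrArg norm h1
    rw [norm_mul, RingHomIsometric.norm_map, norm_one] at this
    nlinarith [norm_nonneg η]
  have hI : I ^ 2 = -1 := Complex.I_sq
  have expand : (2*(ξ:ℂ) + I*(1-(ξ:ℂ)^2)) ^ 4
      - 3 * (2*(ξ:ℂ) + I*(1-(ξ:ℂ)^2)) ^ 3 * (1+(ξ:ℂ)^2)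
      + 3 * (2*(ξ:ℂ) + I*(1-(ξ:ℂ)^2)) * (1+(ξ:ℂ)^2) ^ 3
      + 3 * (1+(ξ:ℂ)^2) ^ 4
      = 2 * (2*(ξ:ℂ) - I*(1-(ξ:ℂ)^2)) * (1+(ξ:ℂ)^2) ^ 3 := by
    linear_combination
      ((4 + 8*I) + (16 - 16*I)*(ξ:ℂ) - 24*(ξ:ℂ)^2 + (16 + 16*I)*(ξ:ℂ)^3 + (4 - 8*I)*(ξ:ℂ)^4) * hC
      + ((-1 - 3*I + I^2) + (-18 + 8*I)*(ξ:ℂ) + (28 + 6*I - 4*I^2)*(ξ:ℂ)^2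
        + (18 - 24*I)*(ξ:ℂ)^3 + (-54 + 6*I^2)*(ξ:ℂ)^4 + (18 + 24*I)*(ξ:ℂ)^5
        + (28 - 6*I - 4*I^2)*(ξ:ℂ)^6 + (-18 - 8*I)*(ξ:ℂ)^7 + (-1 + 3*I + I^2)*(ξ:ℂ)^8) * hI
  have heq : η ^ 4 - 3 * η ^ 3 + 3 * η + 3 = 2 * (starRingEnd ℂ) η := by
    rw [hη']
    simp only [map_div₀, map_add, map_mul, map_sub, map_one, map_pow, map_ofNat,
      Complex.conj_I, Complex.conj_ofReal]
    field_simp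
    linear_combination expand
  refine ⟨hnorm, heq, ?_⟩
  rw [heq, norm_mul, RingHomIsometric.norm_map, hnorm]
  norm_num
end
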